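/- Let n ≥ 4 be an even integer, let a₀ ∈ (0,1) and β ∈ (√(n−3/2), √(n−1)) be such that the real roots of the polynomial P(t) = t^{2n+2} + (n−1)·t^{2n} − 1 are exactly a₀ and −a₀, and iβ, −iβ are (purely imaginary) roots of P. Set g₀(t) = (n+1)·t^{n−1} + t^{n+1} + t^{−(n+1)}. Then: (1) for every complex root α of P with α ∉ {a₀, −a₀, iβ, −iβ}, one has |g₀(α)| < g₀(a₀); moreover g₀(a₀) = −g₀(−a₀) and g₀(a₀) < 2n+2; (2) the complex number i^{n+1}·g₀(iβ) is real, equals i^{n−1}·g₀(−iβ), and satisfies 2(n−1)^{(n−1)/2} < i^{n+1}·g₀(iβ) < 2(n−1)^{(n−1)/2} + 1. -/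

import Mathlib

lemma phi_anti (n : ℕ) (hn : 4 ≤ n) :
    StrictAntiOn (fun r : ℝ => r^(n-1) + (r^(n+1))⁻¹) (Set.Ioc (0:ℝ) 1) := by
  apply strictAntiOn_of_deriv_neg (convex_Ioc 0 1)
  · apply ContinuousOn.add (continuousOn_pow _)
    exact ContinuousOn.inv₀ (continuousOn_pow _)
      (fun x hx => pow_ne_zero _ (ne_of_gt hx.1))
  · intro x hx
    rw [interior_Ioc] at hx
    obtain ⟨hx0, hx1⟩ := hx
    have hxne : x ^ (n+1) ≠ 0 := pow_ne_zero _ (ne_of_gt hx0)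
    have hd : HasDerivAt (fun r : ℝ => r^(n-1) + (r^(n+1))⁻¹)
        ((n-1 : ℕ) * x ^ (n-1-1) + (-((n+1 : ℕ) * x ^ (n+1-1)) / (x^(n+1))^2)) x :=
      (hasDerivAt_pow (n-1) x).add ((hasDerivAt_pow (n+1) x).inv hxne)
    rw [hd.deriv]
    have h1 : (0:ℝ) < (x^(n+1))^2 := by positivity
    have key : ((n:ℝ)-1) * x ^ (n-2) * (x^(n+1))^2 < (n+1 : ℝ) * x ^ n := by
      have e1 : x ^ (n-2) * (x^(n+1))^2 = x ^ n * x ^ (2*n) := by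
        rw [← pow_mul, ← pow_add, ← pow_add]
        congr 1
        omega
      rw [mul_assoc, e1, ← mul_assoc]
      have h2 : x ^ (2*n) < 1 := pow_lt_one₀ (le_of_lt hx0) hx1 (by omega)
      have h3 : (0:ℝ) < x ^ n := by positivity
      have hnR : (4:ℝ) ≤ (n:ℝ) := by exact_mod_cast hn
      nlinarith [mul_lt_mul_of_pos_left h2 (mul_pos (show (0:ℝ) < (n:ℝ)-1 by linarith) h3)]
    have hcast : ((n - 1 : ℕ) : ℝ) = (n:ℝ) - 1 := by
      have : (1:ℕ) ≤ n := by omega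
      push_cast [this]; ring
    have hcast2 : ((n + 1 : ℕ) : ℝ) = (n:ℝ) + 1 := by push_cast; ring
    have e2 : n - 1 - 1 = n - 2 := by omega
    have e3 : n + 1 - 1 = n := by omega
    rw [hcast, hcast2, e2, e3]
    rw [neg_div, ← sub_eq_add_neg, sub_neg]
    rw [lt_div_iff₀ h1]
    linarith [key]

lemma phi_lt (n : ℕ) (hn : 4 ≤ n) {a r : ℝ} (ha : 0 < a) (ha1 : a < 1)
    (h1 : a < r) (h2 : r < a⁻¹) :
    r^(n-1) + (r^(n+1))⁻¹ < a^(n-1) + (a^(n+1))⁻¹ := by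
  have hr0 : 0 < r := lt_trans ha h1
  rcases le_or_gt r 1 with hr1 | hr1
  · exact phi_anti n hn ⟨ha, le_of_lt ha1⟩ ⟨hr0, hr1⟩ h1
  · set ρ := r⁻¹ with hρ
    have hρ0 : 0 < ρ := inv_pos.mpr hr0
    have hρ1 : ρ < 1 := inv_lt_one_of_one_lt₀ hr1
    have hρa : a < ρ := by
      rw [hρ, inv_eq_one_div, lt_div_iff₀ hr0]
      nlinarith [mul_lt_mul_of_pos_left h2 ha, mul_inv_cancel₀ (ne_of_gt ha)]
    have e1 : r^(n-1) = (ρ^(n-1))⁻¹ := by rw [hρ, inv_pow, inv_inv]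
    have e2 : (r^(n+1))⁻¹ = ρ^(n+1) := by rw [hρ, inv_pow]
    rw [e1, e2]
    have step1 : (ρ^(n-1))⁻¹ + ρ^(n+1) ≤ ρ^(n-1) + (ρ^(n+1))⁻¹ := by
      have hp : (0:ℝ) < ρ^(n-1) := by positivity
      have hq : ρ^2 ≤ 1 := by nlinarith
      have hq0 : (0:ℝ) < ρ^2 := by positivity
      have epq : ρ^(n+1) = ρ^(n-1) * ρ^2 := by
        rw [← pow_add]; congr 1; omega
      rw [epq, mul_inv]
      have h6 : 0 ≤ (1 - ρ^2) * (ρ^(n-1) + (ρ^(n-1))⁻¹ * (ρ^2)⁻¹) :=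
        mul_nonneg (by linarith) (by positivity)
      have h7 : (1 - ρ^2) * (ρ^(n-1) + (ρ^(n-1))⁻¹ * (ρ^2)⁻¹)
          = ρ^(n-1) + (ρ^(n-1))⁻¹ * (ρ^2)⁻¹ - (ρ^(n-1))⁻¹ - ρ^(n-1) * ρ^2 := by
        field_simp
        ring
      linarith [h6, h7]
    calc (ρ^(n-1))⁻¹ + ρ^(n+1) ≤ ρ^(n-1) + (ρ^(n+1))⁻¹ := step1
      _ < a^(n-1) + (a^(n+1))⁻¹ := phi_anti n hn ⟨ha, le_of_lt ha1⟩ ⟨hρ0, le_of_lt hρ1⟩ hρa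

lemma abs_add_real_eq {z : ℂ} {c : ℝ} (hc : 0 < c)
    (h : ‖(z + c)‖ = ‖z‖ + c) : z = (‖z‖ : ℂ) := by
  have h2 : ‖(z + c)‖ ^ 2 = (‖z‖ + c) ^ 2 := by rw [h]
  rw [Complex.sq_norm, Complex.normSq_apply] at h2
  simp only [Complex.add_re, Complex.add_im, Complex.ofReal_re, Complex.ofReal_im,
    add_zero] at h2
  have habs : ‖z‖ ^ 2 = z.re * z.re + z.im * z.im := by
    rw [Complex.sq_norm, Complex.normSq_apply]
  have hre : z.re = ‖z‖ := by nlinarith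
  have him' : z.im * z.im = 0 := by nlinarith
  have him : z.im = 0 := mul_self_eq_zero.mp him'
  apply Complex.ext
  · simp [hre]
  · simp [him]

lemma pow_sub_pow_le_real {x y : ℝ} (q : ℕ) (hy : 0 ≤ y) (hxy : y ≤ x) :
    x ^ q - y ^ q ≤ q * x ^ (q - 1) * (x - y) := by
  have hx : 0 ≤ x := le_trans hy hxy
  have hfac := geom_sum₂_mul x y q
  rw [← hfac]
  have hbound : (∑ i ∈ Finset.range q, x ^ i * y ^ (q - 1 - i)) ≤ q * x ^ (q-1) := by
    have := Finset.sum_le_card_nsmul (Finset.range q)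
      (fun i => x ^ i * y ^ (q - 1 - i)) (x ^ (q-1)) ?_
    · simpa [Finset.card_range, nsmul_eq_mul] using this
    · intro i hi
      simp only [Finset.mem_range] at hi
      calc x ^ i * y ^ (q-1-i) ≤ x ^ i * x ^ (q-1-i) := by
            apply mul_le_mul_of_nonneg_left (pow_le_pow_left₀ hy hxy _) (by positivity)
        _ = x ^ (i + (q-1-i)) := (pow_add x _ _).symm
        _ = x ^ (q-1) := by congr 1; omega
  exact mul_le_mul_of_nonneg_right hbound (by linarith)

lemma abs_pow_sub_pow_le' {z w : ℂ} {M : ℝ} (q : ℕ) (hz : ‖z‖ ≤ M)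
    (hw : ‖w‖ ≤ M) :
    ‖(z ^ q - w ^ q)‖ ≤ q * M ^ (q - 1) * ‖(z - w)‖ := by
  have hM : 0 ≤ M := le_trans (norm_nonneg z) hz
  have hfac := geom_sum₂_mul z w q
  rw [← hfac, norm_mul]
  have hbound : ‖(∑ i ∈ Finset.range q, z ^ i * w ^ (q - 1 - i))‖
      ≤ q * M ^ (q-1) := by
    calc ‖(∑ i ∈ Finset.range q, z ^ i * w ^ (q - 1 - i))‖
        ≤ ∑ i ∈ Finset.range q, ‖(z ^ i * w ^ (q - 1 - i))‖ :=
          norm_sum_le _ _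
      _ ≤ ∑ _i ∈ Finset.range q, M ^ (q-1) := by
          apply Finset.sum_le_sum
          intro i hi
          simp only [Finset.mem_range] at hi
          rw [norm_mul, norm_pow, norm_pow]
          calc ‖z‖ ^ i * ‖w‖ ^ (q-1-i)
              ≤ M ^ i * M ^ (q-1-i) := by
                apply mul_le_mul (pow_le_pow_left₀ (norm_nonneg _) hz _)
                  (pow_le_pow_left₀ (norm_nonneg _) hw _) (by positivity) (by positivity)
            _ = M ^ (i + (q-1-i)) := (pow_add M _ _).symm
            _ = M ^ (q-1) := by congr 1; omega
      _ = q * M ^ (q-1) := by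
          rw [Finset.sum_const, Finset.card_range, nsmul_eq_mul]
  exact mul_le_mul_of_nonneg_right hbound (norm_nonneg _)

lemma root_unique (n : ℕ) (hn : 4 ≤ n) {z z2 : ℂ}
    (h1 : z ^ n * (z + ((n:ℂ) - 1)) = 1) (h2 : z2 ^ n * (z2 + ((n:ℂ) - 1)) = 1)
    (hb1 : ‖(z + ((n:ℂ) - 1))‖ ≤ ((n:ℝ) - 1)⁻¹)
    (hb2 : ‖(z2 + ((n:ℂ) - 1))‖ ≤ ((n:ℝ) - 1)⁻¹) : z = z2 := by
  have hnR : (4:ℝ) ≤ (n:ℝ) := by exact_mod_cast hn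
  have hc : (0:ℝ) < (n:ℝ) - 1 := by linarith
  have habs : ‖((n:ℂ) - 1)‖ = (n:ℝ) - 1 := by
    rw [show ((n:ℂ) - 1) = (((n:ℝ) - 1 : ℝ) : ℂ) by push_cast; ring,
      Complex.norm_real, Real.norm_eq_abs, abs_of_pos hc]
  have hinv : ((n:ℝ) - 1)⁻¹ ≤ 1/2 := by
    rw [inv_le_comm₀ hc (by norm_num)]
    linarith
  have key : ∀ w : ℂ, ‖(w + ((n:ℂ) - 1))‖ ≤ ((n:ℝ) - 1)⁻¹ →
      (n:ℝ) - 3/2 ≤ ‖w‖ := by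
    intro w hw
    have h4 : ‖((n:ℂ) - 1)‖ ≤ ‖(w + ((n:ℂ)-1))‖ + ‖w‖ := by
      have h0 : ((n:ℂ) - 1) = (w + ((n:ℂ)-1)) + (-w) := by ring
      calc ‖((n:ℂ)-1)‖ = ‖((w + ((n:ℂ)-1)) + (-w))‖ := by rw [← h0]
        _ ≤ ‖(w + ((n:ℂ)-1))‖ + ‖(-w)‖ := norm_add_le _ _
        _ = ‖(w + ((n:ℂ)-1))‖ + ‖w‖ := by rw [norm_neg]
    rw [habs] at h4
    linarith
  have hz1 : (n:ℝ) - 3/2 ≤ ‖z‖ := key z hb1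
  have hz2 : (n:ℝ) - 3/2 ≤ ‖z2‖ := key z2 hb2
  have hzero : ∀ w : ℂ, (n:ℝ) - 3/2 ≤ ‖w‖ → w ≠ 0 := by
    intro w hw h0
    rw [h0] at hw
    simp at hw
    linarith
  have hz0 : z ≠ 0 := hzero z hz1
  have hz20 : z2 ≠ 0 := hzero z2 hz2
  have hup : ∀ w : ℂ, ‖(w + ((n:ℂ) - 1))‖ ≤ ((n:ℝ) - 1)⁻¹ →
      ‖w‖ ≤ (n:ℝ) := by
    intro w hw
    have h0 : w = (w + ((n:ℂ)-1)) + (-((n:ℂ)-1)) := by ring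
    calc ‖w‖ = ‖((w + ((n:ℂ)-1)) + (-((n:ℂ)-1)))‖ := by rw [← h0]
      _ ≤ ‖(w + ((n:ℂ)-1))‖ + ‖(-((n:ℂ)-1))‖ := norm_add_le _ _
      _ = ‖(w + ((n:ℂ)-1))‖ + ((n:ℝ) - 1) := by rw [norm_neg, habs]
      _ ≤ (n:ℝ) := by linarith
  have hzu : ‖z‖ ≤ (n:ℝ) := hup z hb1
  have hz2u : ‖z2‖ ≤ (n:ℝ) := hup z2 hb2
  have hpow0 : z ^ n ≠ 0 := pow_ne_zero _ hz0
  have hpow20 : z2 ^ n ≠ 0 := pow_ne_zero _ hz20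
  have e1 : z + ((n:ℂ) - 1) = (z ^ n)⁻¹ := eq_inv_of_mul_eq_one_right h1
  have e2 : z2 + ((n:ℂ) - 1) = (z2 ^ n)⁻¹ := eq_inv_of_mul_eq_one_right h2
  have ediff : z - z2 = (z2 ^ n - z ^ n) * ((z ^ n)⁻¹ * (z2 ^ n)⁻¹) := by
    have : z - z2 = (z + ((n:ℂ) - 1)) - (z2 + ((n:ℂ) - 1)) := by ring
    rw [this, e1, e2]
    field_simp
  set A := (n:ℝ) - 3/2 with hA
  have hM32 : (0:ℝ) < A := by rw [hA]; linarith
  set d := ‖(z - z2)‖ with hd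
  have hest : d ≤ ((n:ℝ)^n / (A^2)^n) * d := by
    rw [hd]
    nth_rewrite 1 [ediff]
    rw [norm_mul, norm_mul, norm_inv, norm_inv, norm_pow, norm_pow]
    have hb : ‖(z2 ^ n - z ^ n)‖ ≤ n * (n:ℝ) ^ (n-1) * ‖(z2 - z)‖ :=
      abs_pow_sub_pow_le' n hz2u hzu
    have hswap : ‖(z2 - z)‖ = ‖(z - z2)‖ := by
      rw [show z2 - z = -(z - z2) by ring, norm_neg]
    have hi1 : (‖z‖ ^ n)⁻¹ ≤ (A^n)⁻¹ := by
      apply inv_anti₀ (by positivity)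
      exact pow_le_pow_left₀ (le_of_lt hM32) hz1 n
    have hi2 : (‖z2‖ ^ n)⁻¹ ≤ (A^n)⁻¹ := by
      apply inv_anti₀ (by positivity)
      exact pow_le_pow_left₀ (le_of_lt hM32) hz2 n
    have en : (n:ℝ) * (n:ℝ) ^ (n-1) = (n:ℝ) ^ n := by
      rw [← pow_succ']
      congr 1
      omega
    have en2 : (A ^ n)⁻¹ * (A ^ n)⁻¹ = ((A^2)^n)⁻¹ := by
      rw [← mul_inv, ← pow_add, ← pow_mul, two_mul]
    calc ‖(z2 ^ n - z ^ n)‖ * ((‖z‖ ^ n)⁻¹ * (‖z2‖ ^ n)⁻¹)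
        ≤ (n * (n:ℝ) ^ (n-1) * ‖(z - z2)‖) * ((A ^ n)⁻¹ * (A ^ n)⁻¹) := by
          apply mul_le_mul
          · rw [← hswap]; exact hb
          · exact mul_le_mul hi1 hi2 (by positivity) (by positivity)
          · positivity
          · positivity
      _ = ((n:ℝ)^n / (A^2)^n) * ‖(z - z2)‖ := by
          rw [en2, ← en, div_eq_mul_inv, en]
          ring
  have hK : (n:ℝ)^n / (A^2)^n < 1 := by
    rw [div_lt_one (by positivity)]
    apply pow_lt_pow_left₀ _ (by positivity) (by omega)
    rw [hA]
    nlinarith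
  have hd0 : 0 ≤ d := norm_nonneg _
  have hdz : d = 0 := by nlinarith
  have : z - z2 = 0 := by rwa [hd, norm_eq_zero] at hdz
  exact sub_eq_zero.mp this

set_option maxHeartbeats 1000000 in
lemma v_bounds (n : ℕ) (hn : 4 ≤ n) (hne : Even n) {β : ℝ} (hβpos : 0 < β)
    (hs1 : (n:ℝ) - 3/2 < β^2) (hs2 : β^2 < (n:ℝ) - 1)
    (hB : β^(2*n) * ((n:ℝ) - 1 - β^2) = 1) :
    2*((n:ℝ)-1)^(((n:ℝ)-1)/2) < 2*β^(n-1) + 2*(β^(n+1))⁻¹ ∧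
    2*β^(n-1) + 2*(β^(n+1))⁻¹ < 2*((n:ℝ)-1)^(((n:ℝ)-1)/2) + 1 := by
  have hnR : (4:ℝ) ≤ (n:ℝ) := by exact_mod_cast hn
  set b := Real.sqrt ((n:ℝ)-1) with hbdef
  have hb2 : b^2 = (n:ℝ)-1 := Real.sq_sqrt (by linarith)
  have hbpos : 0 < b := Real.sqrt_pos.mpr (by linarith)
  have hβb : β < b := by
    nlinarith [hb2, hs2, hbpos, hβpos]
  -- rpow to pow
  have hrpow : ((n:ℝ)-1)^(((n:ℝ)-1)/2) = b^(n-1) := by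
    rw [hbdef, Real.sqrt_eq_rpow, ← Real.rpow_natCast (((n:ℝ)-1) ^ ((1:ℝ)/2)) (n-1),
      ← Real.rpow_mul (by linarith)]
    congr 1
    have : ((n - 1 : ℕ) : ℝ) = (n:ℝ) - 1 := by
      have h1 : (1:ℕ) ≤ n := by omega
      push_cast [h1]
      ring
    rw [this]
    ring
  rw [hrpow]
  have hβ1 : 1 < β := by nlinarith
  have hβn1pos : (0:ℝ) < β^(n+1) := by positivity
  constructor
  · -- lower bound
    have hq1 : b^(n-1) - β^(n-1) ≤ ((n-1:ℕ):ℝ) * b^(n-1-1) * (b - β) :=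
      pow_sub_pow_le_real (n-1) hβpos.le hβb.le
    have hexp : n - 1 - 1 = n - 2 := by omega
    rw [hexp] at hq1
    have hcast : ((n-1:ℕ):ℝ) = (n:ℝ) - 1 := by
      have h1 : (1:ℕ) ≤ n := by omega
      push_cast [h1]; ring
    rw [hcast] at hq1
    -- b - β = ((b+β)*β^(2n))⁻¹
    have hbβ : ((b + β) * β^(2*n)) * (b - β) = 1 := by
      calc ((b + β) * β^(2*n)) * (b - β) = (b^2 - β^2) * β^(2*n) := by ring
        _ = ((n:ℝ) - 1 - β^2) * β^(2*n) := by rw [hb2]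
        _ = 1 := by linear_combination hB
    have hbβ' : b - β = ((b + β) * β^(2*n))⁻¹ := eq_inv_of_mul_eq_one_right hbβ
    -- key : (n-1) * b^(n-2) * ((b+β)*β^(2n))⁻¹ < (β^(n+1))⁻¹
    have hkey2 : ((n:ℝ)-1) * b^(n-2) < (b + β) * β^(n-1) := by
      -- via b^(n-2) ≤ (4/3) β^(n-2)
      set u : ℝ := (2*(n:ℝ)-3)⁻¹ with hudef
      have h2n3 : (0:ℝ) < 2*(n:ℝ)-3 := by linarith
      have hu0 : 0 < u := by positivity
      have hu1 : u ≤ 1/5 := by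
        rw [hudef, inv_le_comm₀ h2n3 (by norm_num)]
        linarith
      obtain ⟨k, hk⟩ := hne
      set mm : ℕ := k - 1 with hmm
      have hmmeq : 2 * mm = n - 2 := by omega
      have hmcast : (mm:ℝ) = ((n:ℝ) - 2)/2 := by
        have : (2*mm : ℕ) = (n - 2 : ℕ) := hmmeq
        have h2 : ((2*mm : ℕ):ℝ) = ((n-2:ℕ):ℝ) := by rw [this]
        push_cast [show (2:ℕ) ≤ n by omega] at h2
        linarith
      have hber : 1 - (mm:ℝ)*u ≤ (1-u)^mm := by
        have := one_add_mul_le_pow (a := -u) (by linarith) mm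
        rw [← sub_eq_add_neg] at this
        linarith
      have hmu : (mm:ℝ)*u ≤ 1/4 := by
        rw [hmcast, hudef]
        have h4 := mul_inv_cancel₀ (ne_of_gt h2n3)
        nlinarith [inv_pos.mpr h2n3]
      have h34 : (3:ℝ)/4 ≤ (1-u)^mm := by linarith
      have h41 : (1+u)^mm * (1-u)^mm ≤ 1 := by
        rw [← mul_pow]
        apply pow_le_one₀ (by nlinarith) (by nlinarith)
      have h43 : (1+u)^mm ≤ 4/3 := by
        nlinarith [pow_pos (show (0:ℝ) < 1+u by linarith) mm,
          mul_le_mul_of_nonneg_left h34 (le_of_lt (pow_pos (show (0:ℝ) < 1+u by linarith) mm))]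
      have hbu : b^2 ≤ (1+u) * β^2 := by
        rw [hb2, hudef]
        have h4 := mul_inv_cancel₀ (ne_of_gt h2n3)
        nlinarith [inv_pos.mpr h2n3, hs1]
      have h6 : b^(n-2) ≤ (4/3) * β^(n-2) := by
        have e1 : b^(n-2) = (b^2)^mm := by rw [← pow_mul]; congr 1; omega
        have e2 : β^(n-2) = (β^2)^mm := by rw [← pow_mul]; congr 1; omega
        rw [e1, e2]
        calc (b^2)^mm ≤ ((1+u) * β^2)^mm :=
              pow_le_pow_left₀ (by positivity) hbu mm
          _ = (1+u)^mm * (β^2)^mm := mul_pow _ _ _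
          _ ≤ (4/3) * (β^2)^mm := by
              apply mul_le_mul_of_nonneg_right h43 (by positivity)
      have h7 : ((n:ℝ)-1) * b^(n-2) ≤ (2*(n:ℝ)-3) * β^(n-2) := by
        calc ((n:ℝ)-1) * b^(n-2) ≤ ((n:ℝ)-1) * ((4/3) * β^(n-2)) := by
              apply mul_le_mul_of_nonneg_left h6 (by linarith)
          _ ≤ (2*(n:ℝ)-3) * β^(n-2) := by
              have hβn2 : (0:ℝ) ≤ β^(n-2) := by positivity
              nlinarith
      have h8 : (2*(n:ℝ)-3) * β^(n-2) < (b+β) * β^(n-1) := by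
        have e3 : β^(n-1) = β^(n-2) * β := by
          rw [← pow_succ]; congr 1; omega
        rw [e3]
        have hβn2 : (0:ℝ) < β^(n-2) := by positivity
        have hb2β : 2*β < b + β := by linarith
        have h2b : 2*(n:ℝ)-3 < 2*β^2 := by linarith
        calc (2*(n:ℝ)-3) * β^(n-2) < 2*β^2 * β^(n-2) := by
              apply mul_lt_mul_of_pos_right h2b hβn2
          _ = (2*β) * (β^(n-2) * β) := by ring
          _ < (b+β) * (β^(n-2) * β) := by
              apply mul_lt_mul_of_pos_right hb2β (by positivity)
      linarith
    have hkey : ((n:ℝ)-1) * b^(n-2) * ((b + β) * β^(2*n))⁻¹ < (β^(n+1))⁻¹ := by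
      rw [← div_eq_mul_inv, inv_eq_one_div, div_lt_div_iff₀ (by positivity) hβn1pos]
      have e4 : β^(2*n) = β^(n-1) * β^(n+1) := by
        rw [← pow_add]; congr 1; omega
      calc ((n:ℝ)-1) * b^(n-2) * β^(n+1) < (b+β) * β^(n-1) * β^(n+1) := by
            apply mul_lt_mul_of_pos_right hkey2 hβn1pos
        _ = 1 * ((b+β) * β^(2*n)) := by rw [e4]; ring
    have hfinal : b^(n-1) - β^(n-1) < (β^(n+1))⁻¹ := by
      calc b^(n-1) - β^(n-1) ≤ ((n:ℝ)-1) * b^(n-2) * (b - β) := hq1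
        _ = ((n:ℝ)-1) * b^(n-2) * ((b + β) * β^(2*n))⁻¹ := by rw [hbβ']
        _ < (β^(n+1))⁻¹ := hkey
    linarith
  · -- upper bound
    have h1 : β^(n-1) < b^(n-1) :=
      pow_lt_pow_left₀ hβb hβpos.le (by omega)
    have h2 : (β^(n+1))⁻¹ < 1/2 := by
      rw [inv_lt_comm₀ hβn1pos (by norm_num)]
      have h5 : β^5 ≤ β^(n+1) := pow_le_pow_right₀ hβ1.le (by omega)
      have e5 : β^5 = β * (β^2)^2 := by ring
      nlinarith [hs1, hβ1]
    linarith

set_option maxHeartbeats 1600000 in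
/-- Let `n ≥ 4` be even, `a₀ ∈ (0,1)`, `β ∈ (√(n−3/2), √(n−1))` with the real
roots of `P(t) = t^(2n+2) + (n−1)t^(2n) − 1` exactly `±a₀`, and `±iβ` roots of `P`. Set
`g₀(t) = (n+1)t^(n−1) + t^(n+1) + t^(−(n+1))`. Then (1) every complex root
`α ∉ {a₀, −a₀, iβ, −iβ}` satisfies `|g₀(α)| < g₀(a₀)`; moreover `g₀(a₀) = −g₀(−a₀)` and
`g₀(a₀) < 2n+2`; and (2) `i^(n+1)·g₀(iβ)` is real, equals `i^(n−1)·g₀(−iβ)`, and lies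
strictly between `2(n−1)^((n−1)/2)` and `2(n−1)^((n−1)/2) + 1`. -/
theorem stmt_16 (n : ℕ) (hn : 4 ≤ n) (hne : Even n)
    (a0 : ℝ) (ha0 : a0 ∈ Set.Ioo (0 : ℝ) 1)
    (β : ℝ) (hβ : β ∈ Set.Ioo (Real.sqrt ((n : ℝ) - 3 / 2)) (Real.sqrt ((n : ℝ) - 1)))
    (hreal : ∀ t : ℝ, t ^ (2 * n + 2) + ((n : ℝ) - 1) * t ^ (2 * n) - 1 = 0 ↔
      t = a0 ∨ t = -a0)
    (hI : (Complex.I * β) ^ (2 * n + 2) + ((n : ℂ) - 1) * (Complex.I * β) ^ (2 * n) - 1 = 0)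
    (hI' : (-(Complex.I * β)) ^ (2 * n + 2)
      + ((n : ℂ) - 1) * (-(Complex.I * β)) ^ (2 * n) - 1 = 0) :
    ((∀ α : ℂ, α ^ (2 * n + 2) + ((n : ℂ) - 1) * α ^ (2 * n) - 1 = 0 →
        α ≠ (a0 : ℂ) → α ≠ (-a0 : ℝ) → α ≠ Complex.I * β → α ≠ -(Complex.I * β) →
        ‖(((n : ℂ) + 1) * α ^ (n - 1) + α ^ (n + 1) + α ^ (-((n : ℤ) + 1)))‖ <
          ((n : ℝ) + 1) * a0 ^ (n - 1) + a0 ^ (n + 1) + a0 ^ (-((n : ℤ) + 1))) ∧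
      ((n : ℝ) + 1) * a0 ^ (n - 1) + a0 ^ (n + 1) + a0 ^ (-((n : ℤ) + 1)) =
        -(((n : ℝ) + 1) * (-a0) ^ (n - 1) + (-a0) ^ (n + 1) + (-a0) ^ (-((n : ℤ) + 1))) ∧
      ((n : ℝ) + 1) * a0 ^ (n - 1) + a0 ^ (n + 1) + a0 ^ (-((n : ℤ) + 1)) < 2 * n + 2) ∧
    (∃ v : ℝ,
      Complex.I ^ (n + 1) * (((n : ℂ) + 1) * (Complex.I * β) ^ (n - 1)
          + (Complex.I * β) ^ (n + 1) + (Complex.I * β) ^ (-((n : ℤ) + 1))) = (v : ℂ) ∧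
      Complex.I ^ (n + 1) * (((n : ℂ) + 1) * (Complex.I * β) ^ (n - 1)
          + (Complex.I * β) ^ (n + 1) + (Complex.I * β) ^ (-((n : ℤ) + 1))) =
        Complex.I ^ (n - 1) * (((n : ℂ) + 1) * (-(Complex.I * β)) ^ (n - 1)
          + (-(Complex.I * β)) ^ (n + 1) + (-(Complex.I * β)) ^ (-((n : ℤ) + 1))) ∧
      2 * ((n : ℝ) - 1) ^ (((n : ℝ) - 1) / 2) < v ∧
      v < 2 * ((n : ℝ) - 1) ^ (((n : ℝ) - 1) / 2) + 1) := by
  obtain ⟨ha0pos, ha0lt⟩ := ha0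
  obtain ⟨hβL, hβR⟩ := hβ
  have hnR : (4:ℝ) ≤ (n:ℝ) := by exact_mod_cast hn
  have ha0ne : a0 ≠ 0 := ne_of_gt ha0pos
  have hβpos : 0 < β := lt_of_le_of_lt (Real.sqrt_nonneg _) hβL
  have hs1 : (n:ℝ) - 3/2 < β^2 := by
    have h := (Real.sqrt_lt' hβpos).mp hβL
    linarith
  have hs2 : β^2 < (n:ℝ) - 1 := (Real.lt_sqrt hβpos.le).mp hβR
  have hA : a0^(2*n+2) + ((n:ℝ)-1)*a0^(2*n) - 1 = 0 := (hreal a0).mpr (Or.inl rfl)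
  -- complex I powers
  have i2 : (Complex.I)^(2*n) = 1 := by
    rw [pow_mul, Complex.I_sq]; exact hne.neg_one_pow
  have i1 : (Complex.I)^(2*n+2) = -1 := by
    rw [show 2*n+2 = 2*(n+1) by ring, pow_mul, Complex.I_sq]
    exact (hne.add_one).neg_one_pow
  have hIexp := hI
  rw [mul_pow, mul_pow, i1, i2] at hIexp
  have hBC : ((n:ℂ)-1) * (β:ℂ)^(2*n) - (β:ℂ)^(2*n+2) = 1 := by linear_combination hIexp
  have hB : β^(2*n) * ((n:ℝ)-1-β^2) = 1 := by
    have h2 : ((β^(2*n) * ((n:ℝ)-1-β^2) : ℝ) : ℂ) = ((1:ℝ):ℂ) := by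
      push_cast
      linear_combination hBC
    exact_mod_cast h2
  -- oddness facts
  have hodd1 : Odd (n-1) := by
    obtain ⟨k, hk⟩ := hne
    exact ⟨k-1, by omega⟩
  have hodd2 : Odd (n+1) := hne.add_one
  have hoddz : Odd (-((n:ℤ)+1)) := by
    apply Odd.neg
    have : Even (n:ℤ) := by exact_mod_cast hne
    exact this.add_one
  -- zpow conversion for a0
  have hzp : a0 ^ (-((n:ℤ)+1)) = (a0^(n+1))⁻¹ := by
    rw [show (-((n:ℤ)+1)) = -((n+1:ℕ):ℤ) by push_cast; ring, zpow_neg, zpow_natCast]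
  have hAinv : (a0^(n+1))⁻¹ = a0^(n+1) + ((n:ℝ)-1)*a0^(n-1) := by
    apply inv_eq_of_mul_eq_one_right
    obtain ⟨m, rfl⟩ : ∃ m, n = m + 1 := ⟨n - 1, by omega⟩
    simp only [Nat.add_sub_cancel]
    linear_combination hA
  have hg0 : ((n:ℝ)+1)*a0^(n-1) + a0^(n+1) + a0^(-((n:ℤ)+1))
      = 2*a0^(n-1) + 2*(a0^(n+1))⁻¹ := by
    rw [hzp, hAinv]; ring
  refine ⟨⟨?_, ?_, ?_⟩, ?_⟩
  · -- (1a) main inequality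
    intro α hroot hα1 hα2 hα3 hα4
    have hrootC : α^(2*n+2) + ((n:ℂ)-1)*α^(2*n) = 1 := by linear_combination hroot
    have hα0 : α ≠ 0 := by
      intro h0
      rw [h0] at hrootC
      simp [zero_pow (by omega : 2*n+2 ≠ 0), zero_pow (by omega : 2*n ≠ 0)] at hrootC
    set z := α^2 with hzdef
    have hzroot : z^n * (z + ((n:ℂ)-1)) = 1 := by rw [hzdef]; linear_combination hrootC
    set r := ‖α‖ with hr
    have hrpos : 0 < r := norm_pos_iff.mpr hα0
    have habsz : ‖z‖ = r^2 := by rw [hzdef, norm_pow]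
    have heq : r^(2*n) * ‖(z + ((n:ℂ)-1))‖ = 1 := by
      have h := congrArg (‖·‖) hzroot
      rw [norm_mul, norm_pow, habsz, norm_one] at h
      rw [pow_mul]
      exact h
    have hA1 : a0^(2*n) * (a0^2 + ((n:ℝ)-1)) = 1 := by linear_combination hA
    have habsc : ‖((n:ℂ)-1)‖ = (n:ℝ)-1 := by
      rw [show ((n:ℂ) - 1) = (((n:ℝ) - 1 : ℝ) : ℂ) by push_cast; ring,
        Complex.norm_real, Real.norm_eq_abs, abs_of_pos (by linarith : (0:ℝ) < (n:ℝ)-1)]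
    by_cases hcase : ‖(z + ((n:ℂ)-1))‖ ≤ ((n:ℝ)-1)⁻¹
    · exfalso
      have hβ1 : 1 < β := by nlinarith
      have hBCr : ((β:ℂ))^(2*n) * (((n:ℂ))-1-(β:ℂ)^2) = 1 := by
        have h := congrArg (Complex.ofReal) hB
        push_cast at h
        exact h
      have hBC2 : (-(β:ℂ)^2)^n * ((-(β:ℂ)^2) + ((n:ℂ)-1)) = 1 := by
        have hevenneg : (-(β:ℂ)^2)^n = ((β:ℂ)^2)^n := hne.neg_pow _
        rw [hevenneg, ← pow_mul]
        linear_combination hBCr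
      have hb2bound : ‖((-(β:ℂ)^2) + ((n:ℂ)-1))‖ ≤ ((n:ℝ)-1)⁻¹ := by
        have e : (-(β:ℂ)^2) + ((n:ℂ)-1) = ((((n:ℝ)-1-β^2 : ℝ)):ℂ) := by push_cast; ring
        rw [e, Complex.norm_real, Real.norm_eq_abs, abs_of_pos (by linarith : (0:ℝ) < (n:ℝ)-1-β^2)]
        have hinv : ((n:ℝ)-1-β^2) = (β^(2*n))⁻¹ := (inv_eq_of_mul_eq_one_right hB).symm
        rw [hinv]
        apply inv_anti₀ (by linarith)
        have h4 : β^4 ≤ β^(2*n) := pow_le_pow_right₀ hβ1.le (by omega)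
        have e4 : β^4 = (β^2)^2 := by ring
        nlinarith [hs1, hnR]
      have hzz : z = -(β:ℂ)^2 := root_unique n hn hzroot hBC2 hcase hb2bound
      have hsq : α^2 = (Complex.I*(β:ℂ))^2 := by
        rw [← hzdef, hzz, mul_pow, Complex.I_sq]
        ring
      have hfac : (α - Complex.I*(β:ℂ)) * (α + Complex.I*(β:ℂ)) = 0 := by
        linear_combination hsq
      rcases mul_eq_zero.mp hfac with h | h
      · exact hα3 (sub_eq_zero.mp h)
      · exact hα4 (eq_neg_of_add_eq_zero_left h)
    · push_neg at hcase
      have habspos : 0 < ‖(z + ((n:ℂ)-1))‖ :=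
        lt_trans (inv_pos.mpr (by linarith : (0:ℝ) < (n:ℝ)-1)) hcase
      have htri : ‖(z + ((n:ℂ)-1))‖ ≤ r^2 + ((n:ℝ)-1) := by
        calc ‖(z + ((n:ℂ)-1))‖
            ≤ ‖z‖ + ‖((n:ℂ)-1)‖ := norm_add_le _ _
          _ = r^2 + ((n:ℝ)-1) := by rw [habsz, habsc]
      have h1le : 1 ≤ r^(2*n) * (r^2 + ((n:ℝ)-1)) := by
        calc (1:ℝ) = r^(2*n) * ‖(z + ((n:ℂ)-1))‖ := heq.symm
          _ ≤ r^(2*n) * (r^2 + ((n:ℝ)-1)) := mul_le_mul_of_nonneg_left htri (by positivity)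
      have hrga : a0 < r := by
        rcases lt_trichotomy r a0 with h | h | h
        · exfalso
          have hlt : r^(2*n) * (r^2 + ((n:ℝ)-1)) < a0^(2*n) * (a0^2 + ((n:ℝ)-1)) := by
            apply mul_lt_mul' (pow_le_pow_left₀ hrpos.le h.le _) (by nlinarith)
              (by nlinarith [sq_nonneg r]) (by positivity)
          rw [hA1] at hlt
          linarith
        · exfalso
          have e1 : ‖(z + ((n:ℂ)-1))‖ = (r^(2*n))⁻¹ :=
            eq_inv_of_mul_eq_one_right heq
          have e2 : (r^(2*n))⁻¹ = r^2 + ((n:ℝ)-1) := by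
            rw [h]
            exact inv_eq_of_mul_eq_one_right hA1
          have habseq : ‖(z + ((((n:ℝ)-1 : ℝ)):ℂ))‖ = ‖z‖ + ((n:ℝ)-1) := by
            rw [show ((((n:ℝ)-1 : ℝ)):ℂ) = (n:ℂ)-1 by push_cast; ring, e1, e2, habsz]
          have hzeq := abs_add_real_eq (show (0:ℝ) < (n:ℝ)-1 by linarith) habseq
          have hz2 : z = ((a0^2 : ℝ):ℂ) := by
            rw [hzeq, habsz, h]
          have hsq : α^2 = ((a0:ℝ):ℂ)^2 := by
            rw [← hzdef, hz2]
            push_cast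
            ring
          have hfac : (α - (a0:ℂ)) * (α + (a0:ℂ)) = 0 := by linear_combination hsq
          rcases mul_eq_zero.mp hfac with h' | h'
          · exact hα1 (sub_eq_zero.mp h')
          · apply hα2
            rw [Complex.ofReal_neg]
            exact eq_neg_of_add_eq_zero_left h'
        · exact h
      have hrlt : r < a0⁻¹ := by
        have h2 : r^(2*n) = (‖(z + ((n:ℂ)-1))‖)⁻¹ :=
          eq_inv_of_mul_eq_one_left heq
        have h1 : r^(2*n) < (n:ℝ)-1 := by
          rw [h2]
          exact (inv_lt_comm₀ habspos (by linarith)).mpr hcase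
        have h3 : r^(2*n) < (a0⁻¹)^(2*n) := by
          rw [inv_pow]
          have h5 : (a0^(2*n))⁻¹ = a0^2 + ((n:ℝ)-1) := inv_eq_of_mul_eq_one_right hA1
          rw [h5]
          nlinarith
        exact lt_of_pow_lt_pow_left₀ (2*n) (by positivity) h3
      have hφ := phi_lt n hn ha0pos ha0lt hrga hrlt
      have hαzp : α ^ (-((n:ℤ)+1)) = (α^(n+1))⁻¹ := by
        rw [show (-((n:ℤ)+1)) = -((n+1:ℕ):ℤ) by push_cast; ring, zpow_neg, zpow_natCast]
      have hαinv : (α^(n+1))⁻¹ = α^(n+1) + ((n:ℂ)-1)*α^(n-1) := by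
        apply inv_eq_of_mul_eq_one_right
        obtain ⟨m, hm⟩ : ∃ m, n = m + 1 := ⟨n-1, by omega⟩
        subst hm
        simp only [Nat.add_sub_cancel]
        linear_combination hrootC
      have hgid : ((n:ℂ)+1)*α^(n-1) + α^(n+1) + (α^(n+1))⁻¹ = 2*α^(n-1)*(α^2 + (n:ℂ)) := by
        rw [hαinv]
        obtain ⟨m, hm⟩ : ∃ m, n = m + 1 := ⟨n-1, by omega⟩
        subst hm
        simp only [Nat.add_sub_cancel]
        ring
      rw [hαzp, hgid, hg0, norm_mul, norm_mul, norm_pow]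
      have habs2C : ‖(2:ℂ)‖ = 2 := by norm_num
      rw [habs2C, ← hr]
      have habs2 : ‖(α^2 + (n:ℂ))‖ ≤ (r^(2*n))⁻¹ + 1 := by
        have e : α^2 + (n:ℂ) = (z + ((n:ℂ)-1)) + 1 := by rw [hzdef]; ring
        rw [e]
        calc ‖((z + ((n:ℂ)-1)) + 1)‖
            ≤ ‖(z + ((n:ℂ)-1))‖ + ‖1‖ := norm_add_le _ _
          _ = (r^(2*n))⁻¹ + 1 := by rw [eq_inv_of_mul_eq_one_right heq, norm_one]
      have e6 : r^(n-1) * (r^(2*n))⁻¹ = (r^(n+1))⁻¹ := by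
        rw [show 2*n = (n+1)+(n-1) by omega, pow_add, mul_inv]
        field_simp
      have hchain : 2 * r^(n-1) * ‖(α^2+(n:ℂ))‖ ≤ 2*(r^(n-1) + (r^(n+1))⁻¹) := by
        calc 2 * r^(n-1) * ‖(α^2+(n:ℂ))‖
            ≤ 2 * r^(n-1) * ((r^(2*n))⁻¹ + 1) := by
              apply mul_le_mul_of_nonneg_left habs2 (by positivity)
          _ = 2*(r^(n-1) + (r^(n+1))⁻¹) := by rw [← e6]; ring
      linarith
  · -- (1b) odd symmetry
    have hzpn : (-a0 : ℝ) ^ (-((n:ℤ)+1)) = -(a0 ^ (-((n:ℤ)+1))) := by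
      rw [hoddz.neg_zpow]
    rw [hodd1.neg_pow, hodd2.neg_pow, hzpn]
    push_cast
    ring
  · -- (1c) upper bound at a0
    rw [hg0, hAinv]
    have h1 : a0^(n-1) < 1 := pow_lt_one₀ ha0pos.le ha0lt (by omega)
    have h2 : a0^(n+1) < 1 := pow_lt_one₀ ha0pos.le ha0lt (by omega)
    have h3 : 0 < a0^(n-1) := by positivity
    have h4 : 0 < a0^(n+1) := by positivity
    nlinarith [mul_lt_mul_of_pos_left h1 (show (0:ℝ) < (n:ℝ)-1 by linarith)]
  · -- part 2
    set v : ℝ := ((n:ℝ)+1)*β^(n-1) - β^(n+1) + (β^(n+1))⁻¹ with hv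
    have hIβzp : (Complex.I * (β:ℂ)) ^ (-((n:ℤ)+1)) = ((Complex.I*(β:ℂ))^(n+1))⁻¹ := by
      rw [show (-((n:ℤ)+1)) = -((n+1:ℕ):ℤ) by push_cast; ring, zpow_neg, zpow_natCast]
    have hIβzp' : (-(Complex.I * (β:ℂ))) ^ (-((n:ℤ)+1)) = ((-(Complex.I*(β:ℂ)))^(n+1))⁻¹ := by
      rw [show (-((n:ℤ)+1)) = -((n+1:ℕ):ℤ) by push_cast; ring, zpow_neg, zpow_natCast]
    have hJJ : Complex.I^(n-1) * Complex.I^(n-1) = -1 := by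
      rw [← pow_add, show (n-1)+(n-1) = 2*(n-1) by omega, pow_mul, Complex.I_sq]
      exact hodd1.neg_one_pow
    have hI6 : Complex.I^(n+1) = -Complex.I^(n-1) := by
      rw [show n+1 = (n-1)+2 by omega, pow_add, Complex.I_sq]
      ring
    have hJinv : (-Complex.I^(n-1))⁻¹ = Complex.I^(n-1) := by
      apply inv_eq_of_mul_eq_one_right
      linear_combination -hJJ
    have hEq1 : Complex.I ^ (n + 1) * (((n : ℂ) + 1) * (Complex.I * β) ^ (n - 1)
          + (Complex.I * β) ^ (n + 1) + (Complex.I * β) ^ (-((n : ℤ) + 1))) = (v : ℂ) := by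
      rw [hIβzp, mul_pow, mul_pow, hI6, mul_inv, hJinv, hv]
      push_cast
      linear_combination (-(((n:ℂ)+1)*(β:ℂ)^(n-1) - (β:ℂ)^(n+1) + (((β:ℂ))^(n+1))⁻¹)) * hJJ
    have hEq2 : Complex.I ^ (n - 1) * (((n : ℂ) + 1) * (-(Complex.I * β)) ^ (n - 1)
          + (-(Complex.I * β)) ^ (n + 1) + (-(Complex.I * β)) ^ (-((n : ℤ) + 1))) = (v : ℂ) := by
      rw [hIβzp', hodd1.neg_pow, hodd2.neg_pow, inv_neg, mul_pow, mul_pow, hI6, mul_inv,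
        hJinv, hv]
      push_cast
      linear_combination (-(((n:ℂ)+1)*(β:ℂ)^(n-1) - (β:ℂ)^(n+1) + (((β:ℂ))^(n+1))⁻¹)) * hJJ
    have hβn1pos : (0:ℝ) < β^(n+1) := by positivity
    have hBr : ((n:ℝ)-1)*β^(2*n) - β^(2*n+2) = 1 := by linear_combination hB
    have hβinv : (β^(n+1))⁻¹ = ((n:ℝ)-1)*β^(n-1) - β^(n+1) := by
      apply inv_eq_of_mul_eq_one_right
      obtain ⟨m, hm⟩ : ∃ m, n = m + 1 := ⟨n-1, by omega⟩
      subst hm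
      simp only [Nat.add_sub_cancel]
      linear_combination hBr
    have hveq : v = 2*β^(n-1) + 2*(β^(n+1))⁻¹ := by
      rw [hv, hβinv]
      ring
    obtain ⟨hlow, hup⟩ := v_bounds n hn hne hβpos hs1 hs2 hB
    exact ⟨v, hEq1, hEq1.trans hEq2.symm, by rw [hveq]; exact hlow, by rw [hveq]; exact hup⟩
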